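/- arXiv:2403.20072 — 4 statements merged into one kernel-verified Lean document; each statement's English description precedes it below -/
import Mathlib

section
/- Fundamental conservation-law identity: let u, K, L be C¹ vector fields and G a C¹ scalar field on a space-time domain in ℝ × ℝ³, with div L = 0. Then ∂/∂t (KᵀL) + div{ (u Kᵀ + (G − |u|²/2) I) L } = Lᵀ( DK/Dt + (∂u/∂x)ᵀK + ∇(G − |u|²/2) ) + Kᵀ( ∂L/∂t + (∂L/∂x)u + L div u − (∂u/∂x)L ), where D/Dt = ∂/∂t + uᵀ∇. -/
open Matrix

noncomputable section

abbrev V3 := Fin 3 → ℝ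

/-- spatial partial derivative in direction `i` -/
def pd (i : Fin 3) (f : V3 → ℝ) (x : V3) : ℝ := fderiv ℝ f x (Pi.single i 1)

/-- gradient of a scalar field -/
def grad (f : V3 → ℝ) (x : V3) : V3 := fun i => pd i f x

/-- divergence of a vector field -/
def vdiv (v : V3 → V3) (x : V3) : ℝ := ∑ i, pd i (fun y => v y i) x

/-- spatial Jacobian matrix ∂v/∂x -/
def jac (v : V3 → V3) (x : V3) : Matrix (Fin 3) (Fin 3) ℝ := fun i j => pd j (fun y => v y i) x

/-- curl of a vector field -/
def curl (v : V3 → V3) (x : V3) : V3 :=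
  ![pd 1 (fun y => v y 2) x - pd 2 (fun y => v y 1) x,
    pd 2 (fun y => v y 0) x - pd 0 (fun y => v y 2) x,
    pd 0 (fun y => v y 1) x - pd 1 (fun y => v y 0) x]

/-- cross product in ℝ³ -/
def cross (a b : V3) : V3 :=
  ![a 1 * b 2 - a 2 * b 1, a 2 * b 0 - a 0 * b 2, a 0 * b 1 - a 1 * b 0]

/-- partial time derivative of a scalar field -/
def pt (f : ℝ → V3 → ℝ) (t : ℝ) (x : V3) : ℝ := deriv (fun s => f s x) t

/-- partial time derivative of a vector field -/
def ptV (f : ℝ → V3 → V3) (t : ℝ) (x : V3) : V3 := fun i => pt (fun t x => f t x i) t x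

/-- material derivative D/Dt = ∂/∂t + uᵀ∇ of a scalar field -/
def Dmat (u : ℝ → V3 → V3) (f : ℝ → V3 → ℝ) (t : ℝ) (x : V3) : ℝ :=
  pt f t x + ∑ i, u t x i * pd i (f t) x

/-- material derivative of a vector field, componentwise -/
def DmatV (u f : ℝ → V3 → V3) (t : ℝ) (x : V3) : V3 :=
  fun i => Dmat u (fun t x => f t x i) t x

section helpers

variable {f g : V3 → ℝ} {x : V3} {i : Fin 3}

theorem pd_add (hf : DifferentiableAt ℝ f x) (hg : DifferentiableAt ℝ g x) :
    pd i (fun y => f y + g y) x = pd i f x + pd i g x := by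
  simp [pd, fderiv_fun_add hf hg]

theorem pd_sub (hf : DifferentiableAt ℝ f x) (hg : DifferentiableAt ℝ g x) :
    pd i (fun y => f y - g y) x = pd i f x - pd i g x := by
  simp [pd, fderiv_fun_sub hf hg]

theorem pd_mul (hf : DifferentiableAt ℝ f x) (hg : DifferentiableAt ℝ g x) :
    pd i (fun y => f y * g y) x = pd i f x * g x + f x * pd i g x := by
  simp [pd, fderiv_fun_mul hf hg]; ring

theorem pd_div_const (hf : DifferentiableAt ℝ f x) (c : ℝ) :
    pd i (fun y => f y / c) x = pd i f x / c := by
  simp only [div_eq_mul_inv, pd, fderiv_mul_const hf, ContinuousLinearMap.smul_apply,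
    smul_eq_mul]
  ring

theorem pd_sum {ι : Type*} {s : Finset ι} {F : ι → V3 → ℝ}
    (h : ∀ j ∈ s, DifferentiableAt ℝ (F j) x) :
    pd i (fun y => ∑ j ∈ s, F j y) x = ∑ j ∈ s, pd i (F j) x := by
  simp [pd, fderiv_fun_sum h]

end helpers

theorem diff_div_const {f : V3 → ℝ} {x : V3} (h : DifferentiableAt ℝ f x) (c : ℝ) :
    DifferentiableAt ℝ (fun y => f y / c) x := by
  simpa [div_eq_mul_inv] using h.mul_const c⁻¹

theorem diffV_space {f : ℝ → V3 → V3} (hf : ContDiff ℝ 1 (Function.uncurry f))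
    (t : ℝ) (x : V3) (i : Fin 3) : DifferentiableAt ℝ (fun y => f t y i) x := by
  have h : DifferentiableAt ℝ (fun y : V3 => Function.uncurry f (t, y)) x :=
    (hf.differentiable one_ne_zero (t, x)).comp x ((differentiableAt_const t).prodMk differentiableAt_id)
  exact differentiableAt_pi.mp h i

theorem diffV_time {f : ℝ → V3 → V3} (hf : ContDiff ℝ 1 (Function.uncurry f))
    (t : ℝ) (x : V3) (i : Fin 3) : DifferentiableAt ℝ (fun s => f s x i) t := by
  have h : DifferentiableAt ℝ (fun s : ℝ => Function.uncurry f (s, x)) t :=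
    by have := (hf.differentiable one_ne_zero (t, x)).comp t ((differentiableAt_id : DifferentiableAt ℝ id t).prodMk (differentiableAt_const x)); exact this
  exact differentiableAt_pi.mp h i

theorem diffS_space {f : ℝ → V3 → ℝ} (hf : ContDiff ℝ 1 (Function.uncurry f))
    (t : ℝ) (x : V3) : DifferentiableAt ℝ (fun y => f t y) x :=
  (hf.differentiable one_ne_zero (t, x)).comp x ((differentiableAt_const t).prodMk differentiableAt_id)

/-- Fundamental conservation-law identity (Lemma 3 of the paper). -/
theorem fundamental_conservation_identity (u K L : ℝ → V3 → V3) (G : ℝ → V3 → ℝ)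
    (hu : ContDiff ℝ 1 (Function.uncurry u))
    (hK : ContDiff ℝ 1 (Function.uncurry K))
    (hL : ContDiff ℝ 1 (Function.uncurry L))
    (hG : ContDiff ℝ 1 (Function.uncurry G))
    (hdivL : ∀ t x, vdiv (L t) x = 0)
    (t : ℝ) (x : V3) :
    pt (fun s y => K s y ⬝ᵥ L s y) t x
      + vdiv (fun y => (K t y ⬝ᵥ L t y) • u t y
          + (G t y - (u t y ⬝ᵥ u t y) / 2) • L t y) x
    = L t x ⬝ᵥ (DmatV u K t x + (jac (u t) x)ᵀ *ᵥ K t x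
        + grad (fun y => G t y - (u t y ⬝ᵥ u t y) / 2) x)
      + K t x ⬝ᵥ (ptV L t x + jac (L t) x *ᵥ u t x
        + vdiv (u t) x • L t x - jac (u t) x *ᵥ L t x) := by
  classical
  have hud : ∀ i, DifferentiableAt ℝ (fun y => u t y i) x := diffV_space hu t x
  have hKd : ∀ i, DifferentiableAt ℝ (fun y => K t y i) x := diffV_space hK t x
  have hLd : ∀ i, DifferentiableAt ℝ (fun y => L t y i) x := diffV_space hL t x
  have hGd : DifferentiableAt ℝ (fun y => G t y) x := diffS_space hG t x
  have h1 : DifferentiableAt ℝ (fun y => ∑ i, K t y i * L t y i) x :=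
    DifferentiableAt.fun_sum fun i _ => (hKd i).mul (hLd i)
  have h2 : DifferentiableAt ℝ (fun y => ∑ i, u t y i * u t y i) x :=
    DifferentiableAt.fun_sum fun i _ => (hud i).mul (hud i)
  have h3 : DifferentiableAt ℝ (fun y => G t y - (∑ i, u t y i * u t y i) / 2) x :=
    hGd.sub (diff_div_const h2 2)
  -- time-derivative part
  have hTime : pt (fun s y => K s y ⬝ᵥ L s y) t x
      = ∑ i, (pt (fun t x => K t x i) t x * L t x i
            + K t x i * pt (fun t x => L t x i) t x) := by
    have hKt : ∀ i : Fin 3, HasDerivAt (fun s => K s x i) (pt (fun t x => K t x i) t x) t :=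
      fun i => (diffV_time hK t x i).hasDerivAt
    have hLt : ∀ i : Fin 3, HasDerivAt (fun s => L s x i) (pt (fun t x => L t x i) t x) t :=
      fun i => (diffV_time hL t x i).hasDerivAt
    have h : HasDerivAt (fun s => ∑ i, K s x i * L s x i)
        (∑ i, (pt (fun t x => K t x i) t x * L t x i
            + K t x i * pt (fun t x => L t x i) t x)) t :=
      HasDerivAt.fun_sum fun i _ => (hKt i).mul (hLt i)
    simpa [pt, dotProduct] using h.deriv
  -- divergence part
  have hDiv : vdiv (fun y => (K t y ⬝ᵥ L t y) • u t y
      + (G t y - (u t y ⬝ᵥ u t y) / 2) • L t y) x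
      = ∑ j, ((∑ i, (pd j (fun y => K t y i) x * L t x i
                + K t x i * pd j (fun y => L t y i) x)) * u t x j
            + (∑ i, K t x i * L t x i) * pd j (fun y => u t y j) x
            + (pd j (fun y => G t y) x
                - (∑ i, (pd j (fun y => u t y i) x * u t x i
                    + u t x i * pd j (fun y => u t y i) x)) / 2) * L t x j
            + (G t x - (∑ i, u t x i * u t x i) / 2) * pd j (fun y => L t y j) x) := by
    unfold vdiv
    refine Finset.sum_congr rfl fun j _ => ?_
    have hcomp : (fun y => ((K t y ⬝ᵥ L t y) • u t y
        + (G t y - (u t y ⬝ᵥ u t y) / 2) • L t y) j)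
        = fun y => (∑ i, K t y i * L t y i) * u t y j
            + (G t y - (∑ i, u t y i * u t y i) / 2) * L t y j := by
      funext y; simp [dotProduct]
    rw [hcomp, pd_add (h1.fun_mul (hud j)) (h3.fun_mul (hLd j)), pd_mul h1 (hud j),
      pd_mul h3 (hLd j), pd_sub hGd (diff_div_const h2 2), pd_div_const h2 (2:ℝ),
      pd_sum (F := fun i y => K t y i * L t y i) (fun i _ => (hKd i).mul (hLd i)),
      pd_sum (F := fun i y => u t y i * u t y i) (fun i _ => (hud i).mul (hud i)),
      Finset.sum_congr rfl (fun i _ => pd_mul (hKd i) (hLd i)),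
      Finset.sum_congr rfl (fun i _ => pd_mul (hud i) (hud i))]
    ring
  have hgrad : ∀ i : Fin 3, pd i (fun y => G t y - (u t y ⬝ᵥ u t y) / 2) x
      = pd i (fun y => G t y) x
        - (∑ j, (pd i (fun y => u t y j) x * u t x j
            + u t x j * pd i (fun y => u t y j) x)) / 2 := by
    intro i
    have hcomp : (fun y => G t y - (u t y ⬝ᵥ u t y) / 2)
        = fun y => G t y - (∑ j, u t y j * u t y j) / 2 := by
      funext y; simp [dotProduct]
    rw [hcomp, pd_sub hGd (diff_div_const h2 2), pd_div_const h2 (2:ℝ),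
      pd_sum (F := fun j y => u t y j * u t y j) (fun j _ => (hud j).mul (hud j)),
      Finset.sum_congr rfl (fun j _ => pd_mul (hud j) (hud j))]
  have h0 : ∑ j, pd j (fun y => L t y j) x = 0 := hdivL t x
  rw [hTime, hDiv]
  simp only [DmatV, Dmat, ptV, grad, jac, vdiv, dotProduct, Matrix.mulVec,
    Matrix.transpose_apply, Pi.add_apply, Pi.sub_apply, Pi.smul_apply, smul_eq_mul, hgrad]
  have hg2 : ∀ i : Fin 3,
      pd i (fun y => G t y - (u t y 0 * u t y 0 + u t y 1 * u t y 1 + u t y 2 * u t y 2) / 2) x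
      = pd i (fun y => G t y) x
        - (pd i (fun y => u t y 0) x * u t x 0 + u t x 0 * pd i (fun y => u t y 0) x
          + (pd i (fun y => u t y 1) x * u t x 1 + u t x 1 * pd i (fun y => u t y 1) x)
          + (pd i (fun y => u t y 2) x * u t x 2 + u t x 2 * pd i (fun y => u t y 2) x)) / 2 := by
    intro i
    have he : (fun y : V3 => G t y - (u t y 0 * u t y 0 + u t y 1 * u t y 1 + u t y 2 * u t y 2) / 2)
        = fun y => G t y - (u t y ⬝ᵥ u t y) / 2 := by
      funext y; simp [dotProduct, Fin.sum_univ_three]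
    rw [he, hgrad i, Fin.sum_univ_three]
  simp only [Fin.sum_univ_three] at h0 ⊢
  simp only [hg2]
  linear_combination (G t x - (u t x 0 * u t x 0 + u t x 1 * u t x 1 + u t x 2 * u t x 2) / 2) * h0
end
end

section
/- Helicity conservation law for capillary fluids: if u is a C² velocity field satisfying Du/Dt + ∇H = 0 with H a C² scalar field, and ω = curl u, then ∂/∂t (uᵀω) + div{ (uᵀω) u + (H − |u|²/2) ω } = 0. -/
open Matrix

noncomputable section

namespace CH

def ev (j : Fin 3) : ℝ × V3 := ((0:ℝ), Pi.single j 1)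
def evt : ℝ × V3 := ((1:ℝ), (0:V3))

variable {c d : ℝ × V3 → ℝ} {p v : ℝ × V3}

lemma fdadd (hc : DifferentiableAt ℝ c p) (hd : DifferentiableAt ℝ d p) (v : ℝ × V3) :
    fderiv ℝ (fun q => c q + d q) p v = fderiv ℝ c p v + fderiv ℝ d p v := by
  rw [fderiv_fun_add hc hd]; rfl

lemma fdsub (hc : DifferentiableAt ℝ c p) (hd : DifferentiableAt ℝ d p) (v : ℝ × V3) :
    fderiv ℝ (fun q => c q - d q) p v = fderiv ℝ c p v - fderiv ℝ d p v := by
  rw [fderiv_fun_sub hc hd]; rfl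

lemma fdmul (hc : DifferentiableAt ℝ c p) (hd : DifferentiableAt ℝ d p) (v : ℝ × V3) :
    fderiv ℝ (fun q => c q * d q) p v = fderiv ℝ c p v * d p + c p * fderiv ℝ d p v := by
  rw [fderiv_fun_mul hc hd]; simp [smul_eq_mul]; ring

lemma fddiv2 (hc : DifferentiableAt ℝ c p) (v : ℝ × V3) :
    fderiv ℝ (fun q => c q / 2) p v = fderiv ℝ c p v / 2 := by
  have h : (fun q => c q / 2) = fun q => c q * (2:ℝ)⁻¹ := by funext q; ring
  rw [h, fderiv_mul_const hc]; simp [smul_eq_mul]; ring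

lemma fd_clm_apply {F : ℝ × V3 → (ℝ × V3) →L[ℝ] ℝ} (hF : DifferentiableAt ℝ F p) (w v : ℝ × V3) :
    fderiv ℝ (fun q => F q w) p v = fderiv ℝ F p v w := by
  have h : HasFDerivAt (fun q => F q w)
      ((ContinuousLinearMap.apply ℝ ℝ w).comp (fderiv ℝ F p)) p :=
    ((ContinuousLinearMap.apply ℝ ℝ w).hasFDerivAt).comp p hF.hasFDerivAt
  rw [h.fderiv]; rfl

lemma fd1_diff {f : ℝ × V3 → ℝ} (hf : ContDiff ℝ 2 f) (p : ℝ × V3) :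
    DifferentiableAt ℝ (fderiv ℝ f) p :=
  ((hf.fderiv_right (m := 1) (by norm_num)).differentiable (by norm_num)) p

lemma fd2_symm {f : ℝ × V3 → ℝ} (hf : ContDiff ℝ 2 f) (p v w : ℝ × V3) :
    fderiv ℝ (fderiv ℝ f) p v w = fderiv ℝ (fderiv ℝ f) p w v :=
  second_derivative_symmetric (fun y => ((hf.differentiable (by norm_num)) y).hasFDerivAt)
    ((fd1_diff hf p).hasFDerivAt) v w

lemma pd_curry {f : ℝ × V3 → ℝ} {s : ℝ} {y : V3} (hf : DifferentiableAt ℝ f (s, y)) (j : Fin 3) :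
    pd j (fun z => f (s, z)) y = fderiv ℝ f (s, y) (ev j) := by
  have h : HasFDerivAt (fun z : V3 => f (s, z))
      ((fderiv ℝ f (s, y)).comp (ContinuousLinearMap.inr ℝ ℝ V3)) y :=
    hf.hasFDerivAt.comp y (hasFDerivAt_prodMk_right s y)
  show fderiv ℝ (fun z => f (s, z)) y (Pi.single j 1) = _
  rw [h.fderiv]; rfl

lemma deriv_curry {f : ℝ × V3 → ℝ} {s : ℝ} {y : V3} (hf : DifferentiableAt ℝ f (s, y)) :
    deriv (fun r => f (r, y)) s = fderiv ℝ f (s, y) evt := by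
  have h : HasDerivAt (fun r => f (r, y)) (fderiv ℝ f (s, y) evt) s :=
    hf.hasFDerivAt.comp_hasDerivAt s ((hasDerivAt_id s).prodMk (hasDerivAt_const s y))
  exact h.deriv

variable (u : ℝ → V3 → V3) (H : ℝ → V3 → ℝ)

def A (i : Fin 3) : ℝ × V3 → ℝ := fun p => u p.1 p.2 i
def B (i : Fin 3) : ℝ × V3 → (ℝ × V3) →L[ℝ] ℝ := fderiv ℝ (A u i)
def DH : ℝ × V3 → (ℝ × V3) →L[ℝ] ℝ := fderiv ℝ (Function.uncurry H)

def W0 : ℝ × V3 → ℝ := fun p => B u 2 p (ev 1) - B u 1 p (ev 2)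
def W1 : ℝ × V3 → ℝ := fun p => B u 0 p (ev 2) - B u 2 p (ev 0)
def W2 : ℝ × V3 → ℝ := fun p => B u 1 p (ev 0) - B u 0 p (ev 1)

def Phi : ℝ × V3 → ℝ := fun p =>
  A u 0 p * W0 u p + A u 1 p * W1 u p + A u 2 p * W2 u p

def GG : ℝ × V3 → ℝ := fun p =>
  Function.uncurry H p - (A u 0 p * A u 0 p + A u 1 p * A u 1 p + A u 2 p * A u 2 p) / 2

def Psi0 : ℝ × V3 → ℝ := fun p => Phi u p * A u 0 p + GG u H p * W0 u p
def Psi1 : ℝ × V3 → ℝ := fun p => Phi u p * A u 1 p + GG u H p * W1 u p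
def Psi2 : ℝ × V3 → ℝ := fun p => Phi u p * A u 2 p + GG u H p * W2 u p

def M (i : Fin 3) : ℝ × V3 → ℝ := fun p =>
  B u i p evt + (A u 0 p * B u i p (ev 0) + A u 1 p * B u i p (ev 1) + A u 2 p * B u i p (ev 2))
    + DH H p (ev i)

variable {u H}

lemma contDiff_A (hu : ContDiff ℝ 2 (Function.uncurry u)) (i : Fin 3) :
    ContDiff ℝ 2 (A u i) := by
  exact ((ContinuousLinearMap.proj (R := ℝ) (φ := fun _ : Fin 3 => ℝ) i).contDiff.comp hu :)

lemma diff_A (hu : ContDiff ℝ 2 (Function.uncurry u)) (i : Fin 3) (p : ℝ × V3) :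
    DifferentiableAt ℝ (A u i) p :=
  ((contDiff_A hu i).differentiable (by norm_num)) p

lemma diff_B (hu : ContDiff ℝ 2 (Function.uncurry u)) (i : Fin 3) (p : ℝ × V3) :
    DifferentiableAt ℝ (B u i) p := fd1_diff (contDiff_A hu i) p

lemma diff_Bw (hu : ContDiff ℝ 2 (Function.uncurry u)) (i : Fin 3) (w : ℝ × V3) (p : ℝ × V3) :
    DifferentiableAt ℝ (fun q => B u i q w) p :=
  (ContinuousLinearMap.apply ℝ ℝ w).differentiable.differentiableAt.comp p (diff_B hu i p)

lemma diff_H (hH : ContDiff ℝ 2 (Function.uncurry H)) (p : ℝ × V3) :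
    DifferentiableAt ℝ (Function.uncurry H) p := (hH.differentiable (by norm_num)) p

lemma diff_DH (hH : ContDiff ℝ 2 (Function.uncurry H)) (p : ℝ × V3) :
    DifferentiableAt ℝ (DH H) p := fd1_diff hH p

lemma diff_DHw (hH : ContDiff ℝ 2 (Function.uncurry H)) (w p : ℝ × V3) :
    DifferentiableAt ℝ (fun q => DH H q w) p :=
  (ContinuousLinearMap.apply ℝ ℝ w).differentiable.differentiableAt.comp p (diff_DH hH p)

lemma BA (i : Fin 3) (p v : ℝ × V3) : fderiv ℝ (A u i) p v = B u i p v := rfl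

lemma DHA (p v : ℝ × V3) : fderiv ℝ (Function.uncurry H) p v = DH H p v := rfl

lemma syB (hu : ContDiff ℝ 2 (Function.uncurry u)) (i : Fin 3) (p v w : ℝ × V3) :
    fderiv ℝ (B u i) p v w = fderiv ℝ (B u i) p w v := fd2_symm (contDiff_A hu i) p v w

lemma syH (hH : ContDiff ℝ 2 (Function.uncurry H)) (p v w : ℝ × V3) :
    fderiv ℝ (DH H) p v w = fderiv ℝ (DH H) p w v := fd2_symm hH p v w

section expand
variable (hu : ContDiff ℝ 2 (Function.uncurry u)) (hH : ContDiff ℝ 2 (Function.uncurry H))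
include hu

lemma diff_W0 (p : ℝ × V3) : DifferentiableAt ℝ (W0 u) p :=
  (diff_Bw hu 2 (ev 1) p).sub (diff_Bw hu 1 (ev 2) p)
lemma diff_W1 (p : ℝ × V3) : DifferentiableAt ℝ (W1 u) p :=
  (diff_Bw hu 0 (ev 2) p).sub (diff_Bw hu 2 (ev 0) p)
lemma diff_W2 (p : ℝ × V3) : DifferentiableAt ℝ (W2 u) p :=
  (diff_Bw hu 1 (ev 0) p).sub (diff_Bw hu 0 (ev 1) p)

lemma diff_Phi (p : ℝ × V3) : DifferentiableAt ℝ (Phi u) p :=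
  (((diff_A hu 0 p).mul (diff_W0 hu p)).add ((diff_A hu 1 p).mul (diff_W1 hu p))).add
    ((diff_A hu 2 p).mul (diff_W2 hu p))

lemma diff_sq (p : ℝ × V3) :
    DifferentiableAt ℝ
      (fun q : ℝ × V3 => (A u 0 q * A u 0 q + A u 1 q * A u 1 q + A u 2 q * A u 2 q) / 2) p := by
  have h2 : (fun q : ℝ × V3 => (A u 0 q * A u 0 q + A u 1 q * A u 1 q + A u 2 q * A u 2 q) / 2)
      = fun q => (A u 0 q * A u 0 q + A u 1 q * A u 1 q + A u 2 q * A u 2 q) * (2:ℝ)⁻¹ := by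
    funext q; ring
  rw [h2]
  exact ((((diff_A hu 0 p).mul (diff_A hu 0 p)).add
      ((diff_A hu 1 p).mul (diff_A hu 1 p))).add ((diff_A hu 2 p).mul (diff_A hu 2 p))).mul_const _

include hH in
lemma diff_GG (p : ℝ × V3) : DifferentiableAt ℝ (GG u H) p :=
  (diff_H hH p).sub (diff_sq hu p)

lemma fdW0 (p v : ℝ × V3) : fderiv ℝ (W0 u) p v =
    fderiv ℝ (B u 2) p v (ev 1) - fderiv ℝ (B u 1) p v (ev 2) := by
  rw [show W0 u = fun q => B u 2 q (ev 1) - B u 1 q (ev 2) from rfl,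
    fdsub (diff_Bw hu 2 (ev 1) p) (diff_Bw hu 1 (ev 2) p),
    fd_clm_apply (diff_B hu 2 p), fd_clm_apply (diff_B hu 1 p)]

lemma fdW1 (p v : ℝ × V3) : fderiv ℝ (W1 u) p v =
    fderiv ℝ (B u 0) p v (ev 2) - fderiv ℝ (B u 2) p v (ev 0) := by
  rw [show W1 u = fun q => B u 0 q (ev 2) - B u 2 q (ev 0) from rfl,
    fdsub (diff_Bw hu 0 (ev 2) p) (diff_Bw hu 2 (ev 0) p),
    fd_clm_apply (diff_B hu 0 p), fd_clm_apply (diff_B hu 2 p)]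

lemma fdW2 (p v : ℝ × V3) : fderiv ℝ (W2 u) p v =
    fderiv ℝ (B u 1) p v (ev 0) - fderiv ℝ (B u 0) p v (ev 1) := by
  rw [show W2 u = fun q => B u 1 q (ev 0) - B u 0 q (ev 1) from rfl,
    fdsub (diff_Bw hu 1 (ev 0) p) (diff_Bw hu 0 (ev 1) p),
    fd_clm_apply (diff_B hu 1 p), fd_clm_apply (diff_B hu 0 p)]

lemma fdPhi (p v : ℝ × V3) : fderiv ℝ (Phi u) p v =
    B u 0 p v * (B u 2 p (ev 1) - B u 1 p (ev 2))
      + A u 0 p * (fderiv ℝ (B u 2) p v (ev 1) - fderiv ℝ (B u 1) p v (ev 2))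
      + B u 1 p v * (B u 0 p (ev 2) - B u 2 p (ev 0))
      + A u 1 p * (fderiv ℝ (B u 0) p v (ev 2) - fderiv ℝ (B u 2) p v (ev 0))
      + B u 2 p v * (B u 1 p (ev 0) - B u 0 p (ev 1))
      + A u 2 p * (fderiv ℝ (B u 1) p v (ev 0) - fderiv ℝ (B u 0) p v (ev 1)) := by
  rw [show Phi u = fun q => A u 0 q * W0 u q + A u 1 q * W1 u q + A u 2 q * W2 u q from rfl,
    fdadd (((diff_A hu 0 p).fun_mul (diff_W0 hu p)).fun_add ((diff_A hu 1 p).fun_mul (diff_W1 hu p)))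
      ((diff_A hu 2 p).fun_mul (diff_W2 hu p)),
    fdadd ((diff_A hu 0 p).fun_mul (diff_W0 hu p)) ((diff_A hu 1 p).fun_mul (diff_W1 hu p)),
    fdmul (diff_A hu 0 p) (diff_W0 hu p), fdmul (diff_A hu 1 p) (diff_W1 hu p),
    fdmul (diff_A hu 2 p) (diff_W2 hu p),
    fdW0 hu, fdW1 hu, fdW2 hu]
  simp only [BA, W0, W1, W2]
  ring

include hH in
lemma fdGG (p v : ℝ × V3) : fderiv ℝ (GG u H) p v =
    DH H p v - (B u 0 p v * A u 0 p + A u 0 p * B u 0 p v + B u 1 p v * A u 1 p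
      + A u 1 p * B u 1 p v + B u 2 p v * A u 2 p + A u 2 p * B u 2 p v) / 2 := by
  rw [show GG u H = fun q => Function.uncurry H q
      - (A u 0 q * A u 0 q + A u 1 q * A u 1 q + A u 2 q * A u 2 q) / 2 from rfl,
    fdsub (diff_H hH p) (diff_sq hu p),
    fddiv2 ((((diff_A hu 0 p).fun_mul (diff_A hu 0 p)).fun_add
      ((diff_A hu 1 p).fun_mul (diff_A hu 1 p))).fun_add ((diff_A hu 2 p).fun_mul (diff_A hu 2 p))),
    fdadd (((diff_A hu 0 p).fun_mul (diff_A hu 0 p)).fun_add ((diff_A hu 1 p).fun_mul (diff_A hu 1 p)))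
      ((diff_A hu 2 p).fun_mul (diff_A hu 2 p)),
    fdadd ((diff_A hu 0 p).fun_mul (diff_A hu 0 p)) ((diff_A hu 1 p).fun_mul (diff_A hu 1 p)),
    fdmul (diff_A hu 0 p) (diff_A hu 0 p), fdmul (diff_A hu 1 p) (diff_A hu 1 p),
    fdmul (diff_A hu 2 p) (diff_A hu 2 p)]
  simp only [BA, DHA]
  ring

include hH in
lemma diff_Psi0 (p : ℝ × V3) : DifferentiableAt ℝ (Psi0 u H) p :=
  ((diff_Phi hu p).mul (diff_A hu 0 p)).add ((diff_GG hu hH p).mul (diff_W0 hu p))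

include hH in
lemma diff_Psi1 (p : ℝ × V3) : DifferentiableAt ℝ (Psi1 u H) p :=
  ((diff_Phi hu p).mul (diff_A hu 1 p)).add ((diff_GG hu hH p).mul (diff_W1 hu p))

include hH in
lemma diff_Psi2 (p : ℝ × V3) : DifferentiableAt ℝ (Psi2 u H) p :=
  ((diff_Phi hu p).mul (diff_A hu 2 p)).add ((diff_GG hu hH p).mul (diff_W2 hu p))

end expand

end CH

open CH

/-- Helicity conservation law for capillary fluids. -/
theorem capillary_helicity_conservation (u : ℝ → V3 → V3) (H : ℝ → V3 → ℝ)
    (hu : ContDiff ℝ 2 (Function.uncurry u))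
    (hH : ContDiff ℝ 2 (Function.uncurry H))
    (hmom : ∀ t x, DmatV u u t x + grad (H t) x = 0)
    (t : ℝ) (x : V3) :
    pt (fun s y => u s y ⬝ᵥ curl (u s) y) t x
      + vdiv (fun y => (u t y ⬝ᵥ curl (u t) y) • u t y
          + (H t y - (u t y ⬝ᵥ u t y) / 2) • curl (u t) y) x = 0 := by
  classical
  have hpd : ∀ (s : ℝ) (y : V3) (j k : Fin 3),
      pd j (fun z => u s z k) y = B u k (s, y) (ev j) :=
    fun s y j k => pd_curry (diff_A hu k (s, y)) j
  have hmomU : ∀ (i : Fin 3) (p : ℝ × V3), M u H i p = 0 := by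
    rintro i ⟨s, y⟩
    have h := congrFun (hmom s y) i
    simp only [Pi.add_apply, Pi.zero_apply, DmatV, Dmat, grad, Fin.sum_univ_three] at h
    have c1 : pt (fun t x => u t x i) s y = B u i (s, y) evt :=
      deriv_curry (diff_A hu i (s, y))
    have c2 : ∀ j : Fin 3, pd j (fun z => u s z i) y = B u i (s, y) (ev j) :=
      fun j => hpd s y j i
    have c3 : pd i (H s) y = fderiv ℝ (Function.uncurry H) (s, y) (ev i) :=
      pd_curry (diff_H hH (s, y)) i
    rw [c1, c2 0, c2 1, c2 2, c3] at h
    simp only [M, A, DH]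
    linarith [h]
  have hmomd : ∀ (i : Fin 3) (p v : ℝ × V3), fderiv ℝ (M u H i) p v = 0 := by
    intro i p v
    rw [show M u H i = fun _ => (0 : ℝ) from funext (hmomU i)]
    simp
  have r1 : ∀ i : Fin 3, B u i (t, x) evt
      = -(A u 0 (t, x) * B u i (t, x) (ev 0) + A u 1 (t, x) * B u i (t, x) (ev 1)
          + A u 2 (t, x) * B u i (t, x) (ev 2) + DH H (t, x) (ev i)) := by
    intro i
    have h := hmomU i (t, x)
    simp only [M] at h
    linarith [h]
  have r2 : ∀ i k : Fin 3, fderiv ℝ (B u i) (t, x) (ev k) evt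
      = -(B u 0 (t, x) (ev k) * B u i (t, x) (ev 0)
          + A u 0 (t, x) * fderiv ℝ (B u i) (t, x) (ev k) (ev 0)
          + B u 1 (t, x) (ev k) * B u i (t, x) (ev 1)
          + A u 1 (t, x) * fderiv ℝ (B u i) (t, x) (ev k) (ev 1)
          + B u 2 (t, x) (ev k) * B u i (t, x) (ev 2)
          + A u 2 (t, x) * fderiv ℝ (B u i) (t, x) (ev k) (ev 2)
          + fderiv ℝ (DH H) (t, x) (ev k) (ev i)) := by
    intro i k
    have h := hmomd i (t, x) (ev k)
    rw [show M u H i = (fun q => B u i q evt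
        + (A u 0 q * B u i q (ev 0) + A u 1 q * B u i q (ev 1) + A u 2 q * B u i q (ev 2))
        + DH H q (ev i)) from rfl] at h
    rw [fdadd ((diff_Bw hu i evt (t, x)).fun_add
          ((((diff_A hu 0 (t, x)).fun_mul (diff_Bw hu i (ev 0) (t, x))).fun_add
            ((diff_A hu 1 (t, x)).fun_mul (diff_Bw hu i (ev 1) (t, x)))).fun_add
            ((diff_A hu 2 (t, x)).fun_mul (diff_Bw hu i (ev 2) (t, x)))))
        (diff_DHw hH (ev i) (t, x)),
      fdadd (diff_Bw hu i evt (t, x))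
        ((((diff_A hu 0 (t, x)).fun_mul (diff_Bw hu i (ev 0) (t, x))).fun_add
          ((diff_A hu 1 (t, x)).fun_mul (diff_Bw hu i (ev 1) (t, x)))).fun_add
          ((diff_A hu 2 (t, x)).fun_mul (diff_Bw hu i (ev 2) (t, x)))),
      fdadd (((diff_A hu 0 (t, x)).fun_mul (diff_Bw hu i (ev 0) (t, x))).fun_add
          ((diff_A hu 1 (t, x)).fun_mul (diff_Bw hu i (ev 1) (t, x))))
        ((diff_A hu 2 (t, x)).fun_mul (diff_Bw hu i (ev 2) (t, x))),
      fdadd ((diff_A hu 0 (t, x)).fun_mul (diff_Bw hu i (ev 0) (t, x)))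
        ((diff_A hu 1 (t, x)).fun_mul (diff_Bw hu i (ev 1) (t, x))),
      fdmul (diff_A hu 0 (t, x)) (diff_Bw hu i (ev 0) (t, x)),
      fdmul (diff_A hu 1 (t, x)) (diff_Bw hu i (ev 1) (t, x)),
      fdmul (diff_A hu 2 (t, x)) (diff_Bw hu i (ev 2) (t, x))] at h
    simp only [fd_clm_apply (diff_B hu i (t, x)), fd_clm_apply (diff_DH hH (t, x)), BA] at h
    linarith [h]
  -- convert the pt term
  rw [show pt (fun s y => u s y ⬝ᵥ curl (u s) y) t x
      = deriv (fun s => u s x ⬝ᵥ curl (u s) x) t from rfl]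
  have g0 : (fun s => u s x ⬝ᵥ curl (u s) x) = fun s => Phi u (s, x) := by
    funext s
    simp only [dotProduct, Fin.sum_univ_three, curl, Matrix.cons_val_zero, Matrix.cons_val_one,
      Matrix.head_cons, Matrix.cons_val_two, Matrix.tail_cons]
    simp only [hpd]
    simp only [Phi, W0, W1, W2, A]
  rw [g0, deriv_curry (diff_Phi hu (t, x))]
  -- convert the vdiv term
  have gA : (fun y => ((u t y ⬝ᵥ curl (u t) y) • u t y
      + (H t y - (u t y ⬝ᵥ u t y) / 2) • curl (u t) y) 0) = fun y => Psi0 u H (t, y) := by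
    funext y
    simp only [Pi.add_apply, Pi.smul_apply, smul_eq_mul, dotProduct, Fin.sum_univ_three,
      curl, Matrix.cons_val_zero, Matrix.cons_val_one, Matrix.head_cons, Matrix.cons_val_two,
      Matrix.tail_cons]
    simp only [hpd]
    simp only [Psi0, Phi, GG, W0, W1, W2, A, Function.uncurry_apply_pair]
  have gB : (fun y => ((u t y ⬝ᵥ curl (u t) y) • u t y
      + (H t y - (u t y ⬝ᵥ u t y) / 2) • curl (u t) y) 1) = fun y => Psi1 u H (t, y) := by
    funext y
    simp only [Pi.add_apply, Pi.smul_apply, smul_eq_mul, dotProduct, Fin.sum_univ_three,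
      curl, Matrix.cons_val_zero, Matrix.cons_val_one, Matrix.head_cons, Matrix.cons_val_two,
      Matrix.tail_cons]
    simp only [hpd]
    simp only [Psi1, Phi, GG, W0, W1, W2, A, Function.uncurry_apply_pair]
  have gC : (fun y => ((u t y ⬝ᵥ curl (u t) y) • u t y
      + (H t y - (u t y ⬝ᵥ u t y) / 2) • curl (u t) y) 2) = fun y => Psi2 u H (t, y) := by
    funext y
    simp only [Pi.add_apply, Pi.smul_apply, smul_eq_mul, dotProduct, Fin.sum_univ_three,
      curl, Matrix.cons_val_zero, Matrix.cons_val_one, Matrix.head_cons, Matrix.cons_val_two,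
      Matrix.tail_cons]
    simp only [hpd]
    simp only [Psi2, Phi, GG, W0, W1, W2, A, Function.uncurry_apply_pair]
  have gv : vdiv (fun y => (u t y ⬝ᵥ curl (u t) y) • u t y
      + (H t y - (u t y ⬝ᵥ u t y) / 2) • curl (u t) y) x
      = pd 0 (fun y => Psi0 u H (t, y)) x + pd 1 (fun y => Psi1 u H (t, y)) x
        + pd 2 (fun y => Psi2 u H (t, y)) x := by
    simp only [vdiv, Fin.sum_univ_three]
    rw [gA, gB, gC]
  rw [gv, pd_curry (diff_Psi0 hu hH (t, x)) 0, pd_curry (diff_Psi1 hu hH (t, x)) 1,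
    pd_curry (diff_Psi2 hu hH (t, x)) 2]
  rw [show Psi0 u H = (fun q => Phi u q * A u 0 q + GG u H q * W0 u q) from rfl,
    show Psi1 u H = (fun q => Phi u q * A u 1 q + GG u H q * W1 u q) from rfl,
    show Psi2 u H = (fun q => Phi u q * A u 2 q + GG u H q * W2 u q) from rfl,
    fdadd ((diff_Phi hu (t, x)).fun_mul (diff_A hu 0 (t, x)))
      ((diff_GG hu hH (t, x)).fun_mul (diff_W0 hu (t, x))),
    fdadd ((diff_Phi hu (t, x)).fun_mul (diff_A hu 1 (t, x)))
      ((diff_GG hu hH (t, x)).fun_mul (diff_W1 hu (t, x))),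
    fdadd ((diff_Phi hu (t, x)).fun_mul (diff_A hu 2 (t, x)))
      ((diff_GG hu hH (t, x)).fun_mul (diff_W2 hu (t, x))),
    fdmul (diff_Phi hu (t, x)) (diff_A hu 0 (t, x)),
    fdmul (diff_Phi hu (t, x)) (diff_A hu 1 (t, x)),
    fdmul (diff_Phi hu (t, x)) (diff_A hu 2 (t, x)),
    fdmul (diff_GG hu hH (t, x)) (diff_W0 hu (t, x)),
    fdmul (diff_GG hu hH (t, x)) (diff_W1 hu (t, x)),
    fdmul (diff_GG hu hH (t, x)) (diff_W2 hu (t, x))]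
  simp only [fdPhi hu, fdGG hu hH, fdW0 hu, fdW1 hu, fdW2 hu, BA]
  simp only [Phi, GG, W0, W1, W2]
  simp only [show ∀ (i j : Fin 3), fderiv ℝ (B u i) (t, x) evt (ev j)
      = fderiv ℝ (B u i) (t, x) (ev j) evt from fun i j => syB hu i (t, x) evt (ev j)]
  simp only [r2, r1]
  simp only [show ∀ i : Fin 3, fderiv ℝ (B u i) (t, x) (ev 1) (ev 0)
      = fderiv ℝ (B u i) (t, x) (ev 0) (ev 1) from fun i => syB hu i (t, x) _ _,
    show ∀ i : Fin 3, fderiv ℝ (B u i) (t, x) (ev 2) (ev 0)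
      = fderiv ℝ (B u i) (t, x) (ev 0) (ev 2) from fun i => syB hu i (t, x) _ _,
    show ∀ i : Fin 3, fderiv ℝ (B u i) (t, x) (ev 2) (ev 1)
      = fderiv ℝ (B u i) (t, x) (ev 1) (ev 2) from fun i => syB hu i (t, x) _ _,
    show fderiv ℝ (DH H) (t, x) (ev 1) (ev 0)
      = fderiv ℝ (DH H) (t, x) (ev 0) (ev 1) from syH hH (t, x) _ _,
    show fderiv ℝ (DH H) (t, x) (ev 2) (ev 0)
      = fderiv ℝ (DH H) (t, x) (ev 0) (ev 2) from syH hH (t, x) _ _,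
    show fderiv ℝ (DH H) (t, x) (ev 2) (ev 1)
      = fderiv ℝ (DH H) (t, x) (ev 1) (ev 2) from syH hH (t, x) _ _]
  ring
end
end

section
/- Lie derivative of a two-form (vector representative) along the flow: with the flow φ and Jacobian F as above, let w(t,x) be a C¹ vector field and define w₀(t,X) = (det F) F⁻¹ w(t,φ(t,X)). Then ∂w₀/∂t (at fixed X) equals (det F) F⁻¹ (Dw/Dt + w div u − (∂u/∂x) w) evaluated at x = φ(t,X). In particular w₀ is time-independent iff Dw/Dt + w div u − (∂u/∂x)w = 0. -/
open Matrix

noncomputable section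

private lemma clm_decomp (T : V3 →L[ℝ] ℝ) (c : V3) :
    T c = ∑ m, c m * T (Pi.single m 1) := by
  have h : c = ∑ m : Fin 3, c m • (Pi.single m 1 : V3) := by
    simp only [← Pi.single_smul, smul_eq_mul, mul_one, Finset.univ_sum_single]
  conv_lhs => rw [h]
  rw [map_sum]
  simp

private lemma slice_t_hasDerivAt (f : ℝ × V3 → ℝ) (t : ℝ) (x : V3)
    (hf : DifferentiableAt ℝ f (t, x)) :
    HasDerivAt (fun s => f (s, x)) (fderiv ℝ f (t, x) (1, (0 : V3))) t :=
  hf.hasFDerivAt.comp_hasDerivAt t ((hasDerivAt_id t).prodMk (hasDerivAt_const t x))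

private lemma slice_x_fderiv (f : ℝ × V3 → ℝ) (t : ℝ) (x : V3)
    (hf : DifferentiableAt ℝ f (t, x)) (m : Fin 3) :
    pd m (fun y => f (t, y)) x = fderiv ℝ f (t, x) (0, Pi.single m 1) := by
  have hγ : HasFDerivAt (fun y : V3 => ((t : ℝ), y)) (ContinuousLinearMap.inr ℝ ℝ V3) x :=
    (hasFDerivAt_const t x).prodMk (hasFDerivAt_id x)
  have h : HasFDerivAt (fun y => f (t, y))
      ((fderiv ℝ f (t, x)).comp (ContinuousLinearMap.inr ℝ ℝ V3)) x :=
    hf.hasFDerivAt.comp x hγ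
  rw [pd, h.fderiv]
  rfl

private lemma chain_curve (f : ℝ × V3 → ℝ) (γ : ℝ → V3) (t : ℝ) (c : V3)
    (hf : DifferentiableAt ℝ f (t, γ t)) (hγ : HasDerivAt γ c t) :
    HasDerivAt (fun s => f (s, γ s)) (fderiv ℝ f (t, γ t) (1, c)) t :=
  hf.hasFDerivAt.comp_hasDerivAt t ((hasDerivAt_id t).prodMk hγ)

private lemma pair_decomp (T : ℝ × V3 →L[ℝ] ℝ) (c : V3) :
    T (1, c) = T (1, (0:V3)) + ∑ m, c m * T ((0:ℝ), Pi.single m 1) := by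
  have h : ((1:ℝ), c) = ((1:ℝ), (0:V3)) + ((0:ℝ), c) := by simp
  rw [h, map_add]
  congr 1
  exact clm_decomp (T.comp (ContinuousLinearMap.inr ℝ ℝ V3)) c

private lemma adj_deriv_aux (a : ℝ → Matrix (Fin 3) (Fin 3) ℝ) (v : ℝ → V3)
    (J : Matrix (Fin 3) (Fin 3) ℝ) (Dv : V3) (t : ℝ)
    (ha : ∀ k l, HasDerivAt (fun s => a s k l) (∑ m, J k m * a t m l) t)
    (hv : ∀ j, HasDerivAt (fun s => v s j) (Dv j) t) (i : Fin 3) :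
    HasDerivAt (fun s => ((a s).adjugate *ᵥ v s) i)
      (((a t).adjugate *ᵥ (Dv + (∑ m, J m m) • v t - J *ᵥ v t)) i) t := by
  have ha' : ∀ k l, HasDerivAt (fun s => a s k l)
      (J k 0 * a t 0 l + J k 1 * a t 1 l + J k 2 * a t 2 l) t := by
    intro k l; simpa [Fin.sum_univ_three] using ha k l
  fin_cases i <;>
    simp only [Matrix.mulVec, dotProduct, Fin.sum_univ_three,
      Matrix.adjugate_fin_three, Pi.add_apply, Pi.smul_apply, Pi.sub_apply, smul_eq_mul,
      Fin.mk_zero, Fin.mk_one, Fin.isValue, Matrix.cons_val', Matrix.cons_val_zero,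
      Matrix.cons_val_one, Matrix.head_cons, Matrix.empty_val', Matrix.cons_val_fin_one,
      Matrix.head_fin_const, Matrix.cons_val_two, Matrix.tail_cons, Matrix.of_apply,
      show ((⟨2, by norm_num⟩ : Fin 3) = 2) from rfl]
  · have h1 := (((ha' 1 1).mul (ha' 2 2)).sub ((ha' 1 2).mul (ha' 2 1))).mul (hv 0)
    have h2 := ((((ha' 0 1).mul (ha' 2 2)).neg).add ((ha' 0 2).mul (ha' 2 1))).mul (hv 1)
    have h3 := (((ha' 0 1).mul (ha' 1 2)).sub ((ha' 0 2).mul (ha' 1 1))).mul (hv 2)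
    refine ((h1.add h2).add h3).congr_deriv ?_
    simp only [Pi.mul_apply, Pi.sub_apply, Pi.neg_apply, Pi.add_apply]
    ring
  · have h1 := ((((ha' 1 0).mul (ha' 2 2)).neg).add ((ha' 1 2).mul (ha' 2 0))).mul (hv 0)
    have h2 := (((ha' 0 0).mul (ha' 2 2)).sub ((ha' 0 2).mul (ha' 2 0))).mul (hv 1)
    have h3 := ((((ha' 0 0).mul (ha' 1 2)).neg).add ((ha' 0 2).mul (ha' 1 0))).mul (hv 2)
    refine ((h1.add h2).add h3).congr_deriv ?_
    simp only [Pi.mul_apply, Pi.sub_apply, Pi.neg_apply, Pi.add_apply]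
    ring
  · have h1 := (((ha' 1 0).mul (ha' 2 1)).sub ((ha' 1 1).mul (ha' 2 0))).mul (hv 0)
    have h2 := ((((ha' 0 0).mul (ha' 2 1)).neg).add ((ha' 0 1).mul (ha' 2 0))).mul (hv 1)
    have h3 := (((ha' 0 0).mul (ha' 1 1)).sub ((ha' 0 1).mul (ha' 1 0))).mul (hv 2)
    refine ((h1.add h2).add h3).congr_deriv ?_
    simp only [Pi.mul_apply, Pi.sub_apply, Pi.neg_apply, Pi.add_apply]
    ring

/-- Lie derivative of a two-form (via its vector representative) along the flow. -/
theorem lie_derivative_two_form (u φ w : ℝ → V3 → V3)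
    (F : ℝ → V3 → Matrix (Fin 3) (Fin 3) ℝ)
    (hu : ContDiff ℝ 1 (Function.uncurry u))
    (hφ : ContDiff ℝ 2 (Function.uncurry φ))
    (hw : ContDiff ℝ 1 (Function.uncurry w))
    (hflow : ∀ t X i, deriv (fun s => φ s X i) t = u t (φ t X) i)
    (hF : ∀ t X, F t X = jac (φ t) X)
    (hdet : ∀ t X, (F t X).det ≠ 0)
    (t : ℝ) (X : V3) (i : Fin 3) :
    deriv (fun s => ((F s X).det • ((F s X)⁻¹ *ᵥ w s (φ s X))) i) t
      = ((F t X).det • ((F t X)⁻¹ *ᵥ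
          (DmatV u w t (φ t X) + vdiv (u t) (φ t X) • w t (φ t X)
            - jac (u t) (φ t X) *ᵥ w t (φ t X)))) i := by

  -- component regularity
  have hPhi : ∀ k : Fin 3, ContDiff ℝ 2 (fun p : ℝ × V3 => φ p.1 p.2 k) :=
    fun k => contDiff_pi.mp hφ k
  have hWc : ∀ j : Fin 3, ContDiff ℝ 1 (fun p : ℝ × V3 => w p.1 p.2 j) :=
    fun j => contDiff_pi.mp hw j
  have hUc : ∀ k : Fin 3, ContDiff ℝ 1 (fun p : ℝ × V3 => u p.1 p.2 k) :=
    fun k => contDiff_pi.mp hu k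
  have hPhid : ∀ k : Fin 3, Differentiable ℝ (fun p : ℝ × V3 => φ p.1 p.2 k) :=
    fun k => (hPhi k).differentiable (by norm_num)
  -- the flow curve s ↦ φ s Y has derivative u s (φ s Y)
  have hcurve : ∀ (s : ℝ) (Y : V3) (k : Fin 3),
      HasDerivAt (fun r => φ r Y k) (u s (φ s Y) k) s := by
    intro s Y k
    have h := slice_t_hasDerivAt (fun p : ℝ × V3 => φ p.1 p.2 k) s Y ((hPhid k) (s, Y))
    have hval : fderiv ℝ (fun p : ℝ × V3 => φ p.1 p.2 k) (s, Y) (1, (0 : V3))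
        = u s (φ s Y) k := by
      rw [← hflow s Y k]; exact h.deriv.symm
    exact hval ▸ h
  have hγ : HasDerivAt (fun s => φ s X) (u t (φ t X)) t :=
    hasDerivAt_pi.mpr fun k => hcurve t X k
  -- derivative of s ↦ w s (φ s X)
  have hv : ∀ j, HasDerivAt (fun s => w s (φ s X) j) (DmatV u w t (φ t X) j) t := by
    intro j
    have hWd : DifferentiableAt ℝ (fun p : ℝ × V3 => w p.1 p.2 j) (t, φ t X) :=
      ((hWc j).differentiable one_ne_zero) _
    have h := chain_curve (fun p : ℝ × V3 => w p.1 p.2 j) (fun s => φ s X) t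
      (u t (φ t X)) hWd hγ
    have hval : fderiv ℝ (fun p : ℝ × V3 => w p.1 p.2 j) (t, φ t X) (1, u t (φ t X))
        = DmatV u w t (φ t X) j := by
    -- unfold DmatV
      simp only [DmatV, Dmat, pt]
      rw [pair_decomp]
      congr 1
      · exact ((slice_t_hasDerivAt _ t (φ t X) hWd).deriv).symm
      · refine Finset.sum_congr rfl fun m _ => ?_
        congr 1
        exact (slice_x_fderiv _ t (φ t X) hWd m).symm
    exact hval ▸ h
  -- derivative of the Jacobian entries: F' = (∂u/∂x) F
  have hA : ∀ k l, HasDerivAt (fun s => jac (φ s) X k l)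
      (∑ m, jac (u t) (φ t X) k m * jac (φ t) X m l) t := by
    intro k l
    have hfun : ∀ s, jac (φ s) X k l
        = fderiv ℝ (fun p : ℝ × V3 => φ p.1 p.2 k) (s, X) ((0 : ℝ), Pi.single l 1) :=
      fun s => slice_x_fderiv (fun p : ℝ × V3 => φ p.1 p.2 k) s X ((hPhid k) (s, X)) l
    have hΦ' : ContDiff ℝ 1 (fderiv ℝ (fun p : ℝ × V3 => φ p.1 p.2 k)) :=
      (hPhi k).fderiv_right (by norm_num)
    have hmid : HasFDerivAt (fderiv ℝ (fun p : ℝ × V3 => φ p.1 p.2 k))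
        (fderiv ℝ (fderiv ℝ (fun p : ℝ × V3 => φ p.1 p.2 k)) (t, X)) (t, X) :=
      ((hΦ'.differentiable one_ne_zero) (t, X)).hasFDerivAt
    have hT : HasDerivAt (fun s => fderiv ℝ (fun p : ℝ × V3 => φ p.1 p.2 k) (s, X))
        (fderiv ℝ (fderiv ℝ (fun p : ℝ × V3 => φ p.1 p.2 k)) (t, X) (1, (0 : V3))) t :=
      hmid.comp_hasDerivAt t ((hasDerivAt_id t).prodMk (hasDerivAt_const t X))
    have hTa : HasDerivAt
        (fun s => fderiv ℝ (fun p : ℝ × V3 => φ p.1 p.2 k) (s, X) ((0 : ℝ), Pi.single l 1))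
        (fderiv ℝ (fderiv ℝ (fun p : ℝ × V3 => φ p.1 p.2 k)) (t, X) (1, (0 : V3))
          ((0 : ℝ), Pi.single l 1)) t := by
      simpa using hT.clm_apply (hasDerivAt_const t ((0 : ℝ), (Pi.single l 1 : V3)))
    -- symmetry of the second derivative
    have hsym := ((hPhi k).contDiffAt (x := (t, X))).isSymmSndFDerivAt (by norm_num)
    -- identify the swapped second derivative with ∂/∂X of u∘φ
    have hγt : HasFDerivAt (fun Y : V3 => ((t : ℝ), Y)) (ContinuousLinearMap.inr ℝ ℝ V3) X :=
      (hasFDerivAt_const t X).prodMk (hasFDerivAt_id X)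
    have hG : HasFDerivAt
        (fun Y => fderiv ℝ (fun p : ℝ × V3 => φ p.1 p.2 k) (t, Y) ((1 : ℝ), (0 : V3)))
        ((ContinuousLinearMap.apply ℝ ℝ ((1 : ℝ), (0 : V3))).comp
          ((fderiv ℝ (fderiv ℝ (fun p : ℝ × V3 => φ p.1 p.2 k)) (t, X)).comp
            (ContinuousLinearMap.inr ℝ ℝ V3))) X :=
      (ContinuousLinearMap.apply ℝ ℝ ((1 : ℝ), (0 : V3))).hasFDerivAt.comp X
        (hmid.comp X hγt)
    have e1 : fderiv ℝ
        (fun Y => fderiv ℝ (fun p : ℝ × V3 => φ p.1 p.2 k) (t, Y) ((1 : ℝ), (0 : V3)))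
        X (Pi.single l 1)
        = fderiv ℝ (fderiv ℝ (fun p : ℝ × V3 => φ p.1 p.2 k)) (t, X)
            ((0 : ℝ), Pi.single l 1) ((1 : ℝ), (0 : V3)) := by
      rw [hG.fderiv]; rfl
    have e2 : (fun Y => fderiv ℝ (fun p : ℝ × V3 => φ p.1 p.2 k) (t, Y) ((1 : ℝ), (0 : V3)))
        = fun Y => u t (φ t Y) k := by
      funext Y
      have h := slice_t_hasDerivAt (fun p : ℝ × V3 => φ p.1 p.2 k) t Y ((hPhid k) (t, Y))
      rw [← hflow t Y k]
      exact h.deriv.symm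
    -- chain rule for Y ↦ u t (φ t Y) k
    have hgdiff : DifferentiableAt ℝ (fun x : V3 => u t x k) (φ t X) :=
      DifferentiableAt.comp (φ t X) (((hUc k).differentiable one_ne_zero) (t, φ t X))
        ((differentiableAt_const t).prodMk differentiableAt_id)
    have hφcompdiff : ∀ m : Fin 3, DifferentiableAt ℝ (fun Y => φ t Y m) X :=
      fun m => DifferentiableAt.comp X ((hPhid m) (t, X))
        ((differentiableAt_const t).prodMk differentiableAt_id)
    have hφtdiff : DifferentiableAt ℝ (φ t) X := differentiableAt_pi.mpr hφcompdiff
    have hcomp_m : ∀ m, fderiv ℝ (φ t) X (Pi.single l 1) m = jac (φ t) X m l := by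
      intro m
      have hp : fderiv ℝ (φ t) X
          = ContinuousLinearMap.pi (fun m => fderiv ℝ (fun Y => φ t Y m) X) :=
        fderiv_pi hφcompdiff
      rw [hp]; rfl
    have e3 : fderiv ℝ (fun Y => u t (φ t Y) k) X (Pi.single l 1)
        = ∑ m, jac (u t) (φ t X) k m * jac (φ t) X m l := by
      have hc : fderiv ℝ (fun Y => u t (φ t Y) k) X
          = (fderiv ℝ (fun x : V3 => u t x k) (φ t X)).comp (fderiv ℝ (φ t) X) :=
        fderiv_comp X hgdiff hφtdiff
      rw [hc]
      have : (fderiv ℝ (fun x : V3 => u t x k) (φ t X)) (fderiv ℝ (φ t) X (Pi.single l 1))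
          = ∑ m, (fderiv ℝ (φ t) X (Pi.single l 1)) m
              * (fderiv ℝ (fun x : V3 => u t x k) (φ t X)) (Pi.single m 1) :=
        clm_decomp _ _
      rw [ContinuousLinearMap.comp_apply, this]
      refine Finset.sum_congr rfl fun m _ => ?_
      rw [hcomp_m m]
      exact mul_comm _ _
    have hvalue : fderiv ℝ (fderiv ℝ (fun p : ℝ × V3 => φ p.1 p.2 k)) (t, X)
        (1, (0 : V3)) ((0 : ℝ), Pi.single l 1)
        = ∑ m, jac (u t) (φ t X) k m * jac (φ t) X m l := by
      rw [hsym (1, (0 : V3)) ((0 : ℝ), Pi.single l 1), ← e1, e2, e3]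
    refine HasDerivAt.congr_of_eventuallyEq (hvalue ▸ hTa) ?_
    exact Filter.Eventually.of_forall hfun
  -- rewrite det • inv *ᵥ as adjugate *ᵥ
  have hadj : ∀ (s : ℝ) (b : V3),
      ((F s X).det • ((F s X)⁻¹ *ᵥ b)) = (jac (φ s) X).adjugate *ᵥ b := by
    intro s b
    have hd : IsUnit (F s X).det := isUnit_iff_ne_zero.mpr (hdet s X)
    rw [Matrix.det_smul_inv_mulVec_eq_cramer _ _ hd, Matrix.cramer_eq_adjugate_mulVec, hF]
  have key := adj_deriv_aux (fun s => jac (φ s) X) (fun s => w s (φ s X))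
    (jac (u t) (φ t X)) (DmatV u w t (φ t X)) t hA hv i
  have hrw : (fun s => ((F s X).det • ((F s X)⁻¹ *ᵥ w s (φ s X))) i)
      = fun s => ((jac (φ s) X).adjugate *ᵥ w s (φ s X)) i := by
    funext s; rw [hadj s]
  rw [hrw, key.deriv, hadj t]
  have htr : vdiv (u t) (φ t X) = ∑ m, jac (u t) (φ t X) m m := rfl
  rw [htr]
end
end

section
/- Generalized Ertel invariant: let u be a C¹ velocity field, η a C² scalar field with Dη/Dt = 0, ρ a positive C¹ scalar satisfying ∂ρ/∂t + div(ρu) = 0, and L a C¹ vector field satisfying the Helmholtz equation DL/Dt + L div u − (∂u/∂x)L = 0. Then D/Dt ( (∇η)ᵀ L / ρ ) = 0. -/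
open Matrix

noncomputable section

namespace ErtelAux

def ee (i : Fin 3) : ℝ × V3 := ((0:ℝ), Pi.single i 1)

lemma slice_t (x : V3) (t : ℝ) :
    HasFDerivAt (fun s : ℝ => (s, x)) ((ContinuousLinearMap.id ℝ ℝ).prod 0) t :=
  (hasFDerivAt_id t).prodMk (hasFDerivAt_const x t)

lemma slice_x (t : ℝ) (x : V3) :
    HasFDerivAt (fun y : V3 => ((t, y) : ℝ × V3))
      ((0 : V3 →L[ℝ] ℝ).prod (ContinuousLinearMap.id ℝ V3)) x :=
  (hasFDerivAt_const t x).prodMk (hasFDerivAt_id x)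

lemma pt_eq (f : ℝ → V3 → ℝ) (t : ℝ) (x : V3)
    (hf : DifferentiableAt ℝ (Function.uncurry f) (t, x)) :
    pt f t x = fderiv ℝ (Function.uncurry f) (t, x) ((1:ℝ), (0:V3)) := by
  have h := (hf.hasFDerivAt.comp t (slice_t x t)).hasDerivAt
  have := h.deriv
  simpa [pt, Function.uncurry, Function.comp, Function.comp_def] using this

lemma pd_eq (f : ℝ → V3 → ℝ) (t : ℝ) (x : V3) (i : Fin 3)
    (hf : DifferentiableAt ℝ (Function.uncurry f) (t, x)) :
    pd i (f t) x = fderiv ℝ (Function.uncurry f) (t, x) (ee i) := by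
  have h := (hf.hasFDerivAt.comp x (slice_x t x)).fderiv
  have : pd i (f t) x
      = (fderiv ℝ (Function.uncurry f) (t, x)).comp
          ((0 : V3 →L[ℝ] ℝ).prod (ContinuousLinearMap.id ℝ V3)) (Pi.single i 1) := by
    rw [pd, ← h]; rfl
  simpa [ee] using this

lemma clm_expand (φ : (ℝ × V3) →L[ℝ] ℝ) (vv : V3) :
    φ ((0:ℝ), vv) = ∑ j, vv j * φ (ee j) := by
  have hv : (((0:ℝ), vv) : ℝ × V3) = ∑ j : Fin 3, vv j • ee j := by
    apply Prod.ext
    · simp [ee, Prod.fst_sum]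
    · rw [Prod.snd_sum]
      funext k
      simp only [ee, Prod.smul_mk, Finset.sum_apply, Pi.smul_apply,
        Pi.single_apply, smul_eq_mul, mul_ite, mul_one, mul_zero]
      simp
  rw [hv, map_sum]
  simp [smul_eq_mul]

lemma Dmat_eq (u : ℝ → V3 → V3) (f : ℝ → V3 → ℝ) (t : ℝ) (x : V3)
    (hf : DifferentiableAt ℝ (Function.uncurry f) (t, x)) :
    Dmat u f t x = fderiv ℝ (Function.uncurry f) (t, x) ((1:ℝ), u t x) := by
  have h1 : (((1:ℝ), u t x) : ℝ × V3) = ((1:ℝ), (0:V3)) + ((0:ℝ), u t x) := by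
    ext <;> simp
  rw [h1, map_add, clm_expand]
  rw [Dmat, pt_eq f t x hf]
  congr 1
  exact Finset.sum_congr rfl fun i _ => by rw [pd_eq f t x i hf]

end ErtelAux

namespace ErtelAux

variable {u L : ℝ → V3 → V3} {η ρ : ℝ → V3 → ℝ}

/-- the gradient components as a jointly-defined function -/
def Gf (η : ℝ → V3 → ℝ) (i : Fin 3) (q : ℝ × V3) : ℝ :=
  fderiv ℝ (Function.uncurry η) q (ee i)

lemma pd_mul (g h : V3 → ℝ) (x : V3) (i : Fin 3)
    (hg : DifferentiableAt ℝ g x) (hh : DifferentiableAt ℝ h x) :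
    pd i (fun y => g y * h y) x = pd i g x * h x + g x * pd i h x := by
  simp only [pd, fderiv_fun_mul hg hh, ContinuousLinearMap.add_apply,
    ContinuousLinearMap.smul_apply, smul_eq_mul]
  ring

lemma grad_step (hu : ContDiff ℝ 1 (Function.uncurry u)) (hη : ContDiff ℝ 2 (Function.uncurry η))
    (hηtransport : ∀ t x, Dmat u η t x = 0) (t : ℝ) (x : V3) (i : Fin 3) :
    fderiv ℝ (Gf η i) (t, x) ((1:ℝ), u t x)
      = -∑ j, jac (u t) x j i * Gf η j (t, x) := by
  have hηd : Differentiable ℝ (Function.uncurry η) := hη.differentiable (by norm_num)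
  have hη1 : ContDiff ℝ 1 (fderiv ℝ (Function.uncurry η)) :=
    hη.fderiv_right (m := 1) (by norm_num)
  have hDηd : Differentiable ℝ (fderiv ℝ (Function.uncurry η)) := hη1.differentiable one_ne_zero
  have hud : Differentiable ℝ (Function.uncurry u) := hu.differentiable one_ne_zero
  set p : ℝ × V3 := (t, x) with hp
  set Hη := fderiv ℝ (fderiv ℝ (Function.uncurry η)) p with hHηdef
  have hHη : HasFDerivAt (fderiv ℝ (Function.uncurry η)) Hη p := (hDηd p).hasFDerivAt
  have hsymm : ∀ v w', Hη v w' = Hη w' v :=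
    second_derivative_symmetric (fun y => (hηd y).hasFDerivAt) hHη
  -- transport identity
  have hT : ∀ q : ℝ × V3,
      fderiv ℝ (Function.uncurry η) q ((1:ℝ), Function.uncurry u q) = 0 := by
    intro q
    have h0 := hηtransport q.1 q.2
    rw [Dmat_eq u η q.1 q.2 (hηd _)] at h0
    exact h0
  -- derivative of the transport identity
  have hv : HasFDerivAt (fun q : ℝ × V3 => (((1:ℝ), Function.uncurry u q) : ℝ × V3))
      ((0 : (ℝ × V3) →L[ℝ] ℝ).prod (fderiv ℝ (Function.uncurry u) p)) p :=
    (hasFDerivAt_const (1:ℝ) p).prodMk (hud p).hasFDerivAt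
  have hg := hHη.clm_apply hv
  have hg0 : (fun q => fderiv ℝ (Function.uncurry η) q ((1:ℝ), Function.uncurry u q))
      = fun _ : ℝ × V3 => (0:ℝ) := funext hT
  rw [hg0] at hg
  have hD0 := hg.unique (hasFDerivAt_const 0 p)
  have hkey : ∀ v : ℝ × V3,
      fderiv ℝ (Function.uncurry η) p ((0:ℝ), fderiv ℝ (Function.uncurry u) p v)
        + Hη v ((1:ℝ), Function.uncurry u p) = 0 := by
    intro v
    have := congrArg (fun (φ : (ℝ × V3) →L[ℝ] ℝ) => φ v) hD0
    simpa using this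
  -- derivative of Gf
  have hGhas : HasFDerivAt (Gf η i)
      (((fderiv ℝ (Function.uncurry η) p).comp (0 : (ℝ × V3) →L[ℝ] (ℝ × V3)))
        + Hη.flip (ee i)) p :=
    hHη.clm_apply (hasFDerivAt_const (ee i) p)
  have hGval : fderiv ℝ (Gf η i) p ((1:ℝ), u t x) = Hη ((1:ℝ), u t x) (ee i) := by
    rw [hGhas.fderiv]; simp
  rw [hGval, hsymm]
  have huval : (Function.uncurry u p) = u t x := rfl
  have h2 := hkey (ee i)
  rw [huval] at h2
  have h3 : Hη (ee i) ((1:ℝ), u t x)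
      = -(fderiv ℝ (Function.uncurry η) p ((0:ℝ), fderiv ℝ (Function.uncurry u) p (ee i))) := by
    linarith
  rw [h3, clm_expand]
  -- identify the Jacobian entries
  have hjac : ∀ j : Fin 3, fderiv ℝ (Function.uncurry u) p (ee i) j = jac (u t) x j i := by
    intro j
    have huj : HasFDerivAt (fun q : ℝ × V3 => Function.uncurry u q j)
        ((ContinuousLinearMap.proj j).comp (fderiv ℝ (Function.uncurry u) p)) p :=
      ((ContinuousLinearMap.proj (R := ℝ) (φ := fun _ : Fin 3 => ℝ) j).hasFDerivAt).comp p
        (hud p).hasFDerivAt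
    have h4 : jac (u t) x j i
        = fderiv ℝ (fun q : ℝ × V3 => Function.uncurry u q j) p (ee i) :=
      pd_eq (fun s y => u s y j) t x i huj.differentiableAt
    rw [h4, huj.fderiv]
    rfl
  refine (neg_inj.mpr (Finset.sum_congr rfl fun j _ => ?_))
  rw [hjac j]
  rfl

lemma L_step (hL : ContDiff ℝ 1 (Function.uncurry L))
    (hLeq : ∀ t x, DmatV u L t x + vdiv (u t) x • L t x - jac (u t) x *ᵥ L t x = 0)
    (t : ℝ) (x : V3) (i : Fin 3) :
    fderiv ℝ (fun q : ℝ × V3 => Function.uncurry L q i) (t, x) ((1:ℝ), u t x)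
      = -(vdiv (u t) x * L t x i) + ∑ j, jac (u t) x i j * L t x j := by
  have hLi : Differentiable ℝ (fun q : ℝ × V3 => Function.uncurry L q i) :=
    (contDiff_pi.mp hL i).differentiable one_ne_zero
  have h1 : DmatV u L t x i
      = fderiv ℝ (fun q : ℝ × V3 => Function.uncurry L q i) (t, x) ((1:ℝ), u t x) :=
    Dmat_eq u (fun s y => L s y i) t x (hLi (t, x))
  have h0 := congrFun (hLeq t x) i
  simp only [Pi.add_apply, Pi.sub_apply, Pi.smul_apply, smul_eq_mul, mulVec, dotProduct,
    Pi.zero_apply] at h0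
  rw [h1] at h0
  linarith

lemma R_step (hu : ContDiff ℝ 1 (Function.uncurry u)) (hρ : ContDiff ℝ 1 (Function.uncurry ρ))
    (hcontinuity : ∀ t x, pt ρ t x + vdiv (fun y => ρ t y • u t y) x = 0)
    (t : ℝ) (x : V3) :
    fderiv ℝ (Function.uncurry ρ) (t, x) ((1:ℝ), u t x) = -(ρ t x * vdiv (u t) x) := by
  have hρd : Differentiable ℝ (Function.uncurry ρ) := hρ.differentiable one_ne_zero
  have hud : Differentiable ℝ (Function.uncurry u) := hu.differentiable one_ne_zero
  have hρt : DifferentiableAt ℝ (ρ t) x :=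
    (hρd (t, x)).comp x ((differentiableAt_const t).prodMk differentiableAt_id)
  have hut : ∀ j : Fin 3, DifferentiableAt ℝ (fun y => u t y j) x := fun j =>
    (((contDiff_pi.mp hu j).differentiable one_ne_zero) (t, x)).comp x
      ((differentiableAt_const t).prodMk differentiableAt_id)
  rw [← Dmat_eq u ρ t x (hρd (t, x))]
  have hc := hcontinuity t x
  have hdivexp : vdiv (fun y => ρ t y • u t y) x
      = ∑ i, (pd i (ρ t) x * u t x i + ρ t x * pd i (fun y => u t y i) x) := by
    rw [vdiv]
    refine Finset.sum_congr rfl fun i _ => ?_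
    have he : (fun y => (ρ t y • u t y) i) = fun y => ρ t y * u t y i := by
      funext y; simp
    rw [he, pd_mul (ρ t) (fun y => u t y i) x i hρt (hut i)]
  rw [hdivexp] at hc
  rw [Dmat]
  have hpt : pt ρ t x
      = -∑ i, (pd i (ρ t) x * u t x i + ρ t x * pd i (fun y => u t y i) x) := by linarith
  rw [hpt, vdiv]
  rw [Finset.sum_add_distrib, Finset.mul_sum]
  have : ∑ i, u t x i * pd i (ρ t) x = ∑ i, pd i (ρ t) x * u t x i :=
    Finset.sum_congr rfl fun i _ => mul_comm _ _
  rw [this]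
  ring

/-- the dot product (∇η)ᵀL as a jointly-defined function -/
def Nf (η : ℝ → V3 → ℝ) (L : ℝ → V3 → V3) (q : ℝ × V3) : ℝ :=
  ∑ i, Gf η i q * Function.uncurry L q i

lemma Gf_diff (hη : ContDiff ℝ 2 (Function.uncurry η)) (i : Fin 3) :
    Differentiable ℝ (Gf η i) :=
  ((hη.fderiv_right (m := 1) (by norm_num)).differentiable one_ne_zero).clm_apply
    (differentiable_const _)

lemma N_step (hu : ContDiff ℝ 1 (Function.uncurry u)) (hL : ContDiff ℝ 1 (Function.uncurry L))
    (hη : ContDiff ℝ 2 (Function.uncurry η))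
    (hηtransport : ∀ t x, Dmat u η t x = 0)
    (hLeq : ∀ t x, DmatV u L t x + vdiv (u t) x • L t x - jac (u t) x *ᵥ L t x = 0)
    (t : ℝ) (x : V3) :
    fderiv ℝ (Nf η L) (t, x) ((1:ℝ), u t x) = -(vdiv (u t) x * Nf η L (t, x)) := by
  have hGd : ∀ i, Differentiable ℝ (Gf η i) := Gf_diff hη
  have hLi : ∀ i, Differentiable ℝ (fun q : ℝ × V3 => Function.uncurry L q i) := fun i =>
    (contDiff_pi.mp hL i).differentiable one_ne_zero
  have h1 : fderiv ℝ (Nf η L) (t, x)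
      = ∑ i, fderiv ℝ (fun q => Gf η i q * Function.uncurry L q i) (t, x) :=
    fderiv_fun_sum (fun i _ => ((hGd i (t, x)).mul (hLi i (t, x))))
  have h2 : ∀ i : Fin 3, fderiv ℝ (fun q => Gf η i q * Function.uncurry L q i) (t, x)
        ((1:ℝ), u t x)
      = Gf η i (t, x) * (fderiv ℝ (fun q : ℝ × V3 => Function.uncurry L q i) (t, x)
          ((1:ℝ), u t x))
        + L t x i * (fderiv ℝ (Gf η i) (t, x) ((1:ℝ), u t x)) := by
    intro i
    rw [fderiv_fun_mul (hGd i (t, x)) (hLi i (t, x))]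
    simp only [ContinuousLinearMap.add_apply, ContinuousLinearMap.smul_apply, smul_eq_mul]
    rfl
  have h3 : fderiv ℝ (Nf η L) (t, x) ((1:ℝ), u t x)
      = ∑ i, (Gf η i (t, x) * (-(vdiv (u t) x * L t x i) + ∑ j, jac (u t) x i j * L t x j)
          + L t x i * (-∑ j, jac (u t) x j i * Gf η j (t, x))) := by
    rw [h1, ContinuousLinearMap.sum_apply]
    refine Finset.sum_congr rfl fun i _ => ?_
    rw [h2 i, L_step hL hLeq t x i, grad_step hu hη hηtransport t x i]
  rw [h3, Nf]
  have huL : ∀ i : Fin 3, Function.uncurry L (t, x) i = L t x i := fun _ => rfl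
  simp only [huL, Fin.sum_univ_three]
  ring

end ErtelAux

open ErtelAux in
/-- Generalized Ertel invariant: D/Dt ((∇η)ᵀ L / ρ) = 0. -/
theorem generalized_ertel_invariant (u L : ℝ → V3 → V3) (η ρ : ℝ → V3 → ℝ)
    (hu : ContDiff ℝ 1 (Function.uncurry u))
    (hL : ContDiff ℝ 1 (Function.uncurry L))
    (hη : ContDiff ℝ 2 (Function.uncurry η))
    (hρ : ContDiff ℝ 1 (Function.uncurry ρ))
    (hρpos : ∀ t x, 0 < ρ t x)
    (hηtransport : ∀ t x, Dmat u η t x = 0)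
    (hcontinuity : ∀ t x, pt ρ t x + vdiv (fun y => ρ t y • u t y) x = 0)
    (hLeq : ∀ t x, DmatV u L t x + vdiv (u t) x • L t x - jac (u t) x *ᵥ L t x = 0)
    (t : ℝ) (x : V3) :
    Dmat u (fun s y => (grad (η s) y ⬝ᵥ L s y) / ρ s y) t x = 0 := by
  have hηd : Differentiable ℝ (Function.uncurry η) := hη.differentiable (by norm_num)
  have hρd : Differentiable ℝ (Function.uncurry ρ) := hρ.differentiable one_ne_zero
  have hGd : ∀ i, Differentiable ℝ (Gf η i) := Gf_diff hη
  have hLi : ∀ i, Differentiable ℝ (fun q : ℝ × V3 => Function.uncurry L q i) := fun i =>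
    (contDiff_pi.mp hL i).differentiable one_ne_zero
  have hNd : Differentiable ℝ (Nf η L) := by
    intro q
    exact DifferentiableAt.fun_sum (fun i _ => ((hGd i q).mul (hLi i q)))
  have hRne : ∀ q : ℝ × V3, Function.uncurry ρ q ≠ 0 := fun q => ne_of_gt (hρpos q.1 q.2)
  have hfun : Function.uncurry (fun s y => (grad (η s) y ⬝ᵥ L s y) / ρ s y)
      = fun q => Nf η L q / Function.uncurry ρ q := by
    funext q
    show (grad (η q.1) q.2 ⬝ᵥ L q.1 q.2) / ρ q.1 q.2 = _
    congr 1
    refine Finset.sum_congr rfl fun i _ => ?_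
    have hg : grad (η q.1) q.2 i = Gf η i q := pd_eq η q.1 q.2 i (hηd _)
    rw [hg]
    rfl
  have hdivmul : (fun q => Nf η L q / Function.uncurry ρ q)
      = fun q => Nf η L q * (Function.uncurry ρ q)⁻¹ :=
    funext fun q => div_eq_mul_inv _ _
  have hFd : DifferentiableAt ℝ (fun q => Nf η L q / Function.uncurry ρ q) (t, x) := by
    rw [hdivmul]
    exact (hNd (t, x)).mul ((hρd (t, x)).inv (hRne (t, x)))
  have hdiff : DifferentiableAt ℝ
      (Function.uncurry (fun s y => (grad (η s) y ⬝ᵥ L s y) / ρ s y)) (t, x) := by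
    rw [hfun]; exact hFd
  rw [Dmat_eq u _ t x hdiff, hfun]
  have hNw := N_step hu hL hη hηtransport hLeq t x
  have hRw := R_step hu hρ hcontinuity t x
  have hFfun : (fun q => Nf η L q / Function.uncurry ρ q * Function.uncurry ρ q) = Nf η L :=
    funext fun q => div_mul_cancel₀ _ (hRne q)
  have hmul := fderiv_fun_mul hFd (hρd (t, x))
  rw [hFfun] at hmul
  have hmw := congrArg (fun φ : (ℝ × V3) →L[ℝ] ℝ => φ ((1:ℝ), u t x)) hmul
  simp only [ContinuousLinearMap.add_apply, ContinuousLinearMap.smul_apply, smul_eq_mul] at hmw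
  rw [hNw, hRw] at hmw
  have hR0 : ρ t x ≠ 0 := ne_of_gt (hρpos t x)
  have hρval : Function.uncurry ρ (t, x) = ρ t x := rfl
  rw [hρval] at hmw
  have hdiv : Nf η L (t, x) / ρ t x * -(ρ t x * vdiv (u t) x)
      = -(vdiv (u t) x * Nf η L (t, x)) := by
    field_simp
  rw [hdiv] at hmw
  have hz : ρ t x * fderiv ℝ (fun q => Nf η L q / Function.uncurry ρ q) (t, x)
      ((1:ℝ), u t x) = 0 := by linarith
  exact (mul_eq_zero.mp hz).resolve_left hR0
end
end
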